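/- For n ≥ 2 with n ≡ 1 or 2 (mod 4), the Cayley graph Q₊ⁿ of (Z/2Z)^n with generating set {e₁, …, eₙ, e₁+⋯+eₙ} admits no orthogonal signing. -/

import Mathlib

open scoped Classical

def cayley (n : ℕ) (S : Set (Fin n → ZMod 2)) : SimpleGraph (Fin n → ZMod 2) where
  Adj x y := x ≠ y ∧ x + y ∈ S
  symm := by
    constructor
    intro x y h
    exact ⟨h.1.symm, by rw [add_comm]; exact h.2⟩
  loopless := by
    constructor
    intro x h
    exact h.1 rfl

/-- The generating set `{e₁, …, eₙ, e₁ + ⋯ + eₙ}` of `Q₊ⁿ`. -/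
def QPlusGens (n : ℕ) : Set (Fin n → ZMod 2) :=
  Set.range (fun i : Fin n => Pi.single i 1) ∪ {∑ i : Fin n, Pi.single i 1}

/-- The graph `Q₊ⁿ`. -/
def QPlus (n : ℕ) : SimpleGraph (Fin n → ZMod 2) := cayley n (QPlusGens n)

/-- An orthogonal signing of a graph `G` on a finite vertex set: a symmetric matrix with
entries `±1` on edges and `0` elsewhere, whose distinct rows are orthogonal. -/
def IsOrthSigning {V : Type*} [Fintype V] (G : SimpleGraph V) (M : Matrix V V ℝ) : Prop :=
  M.IsSymm ∧ (∀ u v, G.Adj u v → M u v = 1 ∨ M u v = -1) ∧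
    (∀ u v, ¬ G.Adj u v → M u v = 0) ∧
    (∀ u v, u ≠ v → ∑ w, M u w * M v w = 0)

/-! ### Auxiliary definitions -/

def eV (n : ℕ) (i : Fin n) : Fin n → ZMod 2 := Pi.single i 1
def sV (n : ℕ) : Fin n → ZMod 2 := ∑ i : Fin n, Pi.single i 1
def eN (n : ℕ) (k : ℕ) : Fin n → ZMod 2 := if h : k < n then eV n ⟨k, h⟩ else 0
def WV (n : ℕ) (a b : ℕ) : Fin n → ZMod 2 := ∑ k ∈ Finset.Ico a b, eN n k

section Aux

variable {n : ℕ}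

lemma eV_apply_same (i : Fin n) : eV n i i = 1 := Pi.single_eq_same i 1

lemma eV_apply_ne {i j : Fin n} (h : j ≠ i) : eV n i j = 0 := Pi.single_eq_of_ne h 1

lemma sV_apply (j : Fin n) : sV n j = 1 := by
  classical
  simp [sV, Finset.sum_apply, Pi.single_apply]

lemma addself (x : Fin n → ZMod 2) : x + x = 0 := funext fun j => by
  have : ∀ a : ZMod 2, a + a = 0 := by decide
  exact this _

lemma eV_ne_eV {i j : Fin n} (h : i ≠ j) : eV n i ≠ eV n j := by
  intro he
  have h1 := congrFun he i
  rw [eV_apply_same, eV_apply_ne h] at h1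
  exact one_ne_zero h1

lemma eV_ne_zero (i : Fin n) : eV n i ≠ 0 := by
  intro h
  have := congrFun h i
  rw [eV_apply_same] at this
  exact one_ne_zero this

lemma sV_ne_zero (hn : 1 ≤ n) : sV n ≠ 0 := by
  intro h
  have := congrFun h ⟨0, hn⟩
  rw [sV_apply] at this
  exact one_ne_zero this

lemma eV_ne_sV (hn : 2 ≤ n) (i : Fin n) : eV n i ≠ sV n := by
  have hcard : 1 < Fintype.card (Fin n) := by simp; omega
  obtain ⟨j, hj⟩ := Fintype.exists_ne_of_one_lt_card hcard i
  intro h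
  have := congrFun h j
  rw [eV_apply_ne hj, sV_apply] at this
  exact zero_ne_one this

lemma exists_fresh (hn4 : 4 ≤ n) (a b c : Fin n) : ∃ t : Fin n, t ≠ a ∧ t ≠ b ∧ t ≠ c := by
  by_contra h
  push_neg at h
  have hsub : (Finset.univ : Finset (Fin n)) ⊆ {a, b, c} := by
    intro t _
    simp only [Finset.mem_insert, Finset.mem_singleton]
    by_cases h1 : t = a
    · exact Or.inl h1
    by_cases h2 : t = b
    · exact Or.inr (Or.inl h2)
    exact Or.inr (Or.inr (h t h1 h2))
  have hle := Finset.card_le_card hsub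
  have h3 : ({a, b, c} : Finset (Fin n)).card ≤ 3 := by
    refine (Finset.card_insert_le _ _).trans ?_
    have h4 : ({b, c} : Finset (Fin n)).card ≤ 2 := by
      refine (Finset.card_insert_le _ _).trans ?_
      simp
    omega
  rw [Finset.card_univ, Fintype.card_fin] at hle
  omega

lemma shift3 {x a b c d : Fin n → ZMod 2} (h : x + a = x + b + c + d) : a = b + c + d := by
  have h' : x + a = x + (b + c + d) := by rw [h]; abel
  exact add_left_cancel h'

lemma shift2 {x a b c : Fin n → ZMod 2} (h : x + a = x + b + c) : a = b + c := by
  have h' : x + a = x + (b + c) := by rw [h]; abel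
  exact add_left_cancel h'

lemma mem_gens {g : Fin n → ZMod 2} :
    g ∈ QPlusGens n ↔ (∃ i : Fin n, eV n i = g) ∨ g = sV n := Iff.rfl

lemma adj_iff {x y : Fin n → ZMod 2} :
    (QPlus n).Adj x y ↔ x ≠ y ∧ x + y ∈ QPlusGens n := Iff.rfl

lemma adj_e (x : Fin n → ZMod 2) (i : Fin n) : (QPlus n).Adj x (x + eV n i) := by
  constructor
  · intro h
    exact eV_ne_zero i (left_eq_add.mp h)
  · have h : x + (x + eV n i) = eV n i := by rw [← add_assoc, addself, zero_add]
    rw [h]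
    exact Or.inl ⟨i, rfl⟩

lemma adj_s (hn : 1 ≤ n) (x : Fin n → ZMod 2) : (QPlus n).Adj x (x + sV n) := by
  constructor
  · intro h
    exact sV_ne_zero hn (left_eq_add.mp h)
  · have h : x + (x + sV n) = sV n := by rw [← add_assoc, addself, zero_add]
    rw [h]
    exact Or.inr rfl

lemma heN (k : ℕ) (hk : k < n) : eN n k = eV n ⟨k, hk⟩ := dif_pos hk

lemma WV_same (a : ℕ) : WV n a a = 0 := by simp [WV]

lemma WV_succ_top {a b : ℕ} (h : a ≤ b) : WV n a (b + 1) = WV n a b + eN n b :=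
  Finset.sum_Ico_succ_top h _

lemma WV_succ_bot {a b : ℕ} (h : a < b) : WV n a b = eN n a + WV n (a + 1) b :=
  Finset.sum_eq_sum_Ico_succ_bot h _

lemma WV_zero_n : WV n 0 n = sV n := by
  rw [WV, sV, show (Finset.Ico 0 n : Finset ℕ) = Finset.range n from by rw [Finset.range_eq_Ico],
    ← Fin.sum_univ_eq_sum_range (fun k => eN n k) n]
  apply Finset.sum_congr rfl
  intro i _
  simp [eN, eV]

lemma WV_split {k : ℕ} (hk : k ≤ n) : WV n 0 k + WV n k n = sV n := by
  rw [← WV_zero_n]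
  exact Finset.sum_Ico_consecutive _ (Nat.zero_le k) hk

lemma WV_plus_s {k : ℕ} (hk : k ≤ n) : WV n 0 k + sV n = WV n k n := by
  rw [← WV_split hk, ← add_assoc, addself, zero_add]

end Aux

/-! ### Real-number ±1 helpers -/

lemma tele_prod (f : ℕ → ℝ) (hf : ∀ k, f k * f k = 1) :
    ∀ m, ∏ k ∈ Finset.range m, (f (k + 1) * f k) = f m * f 0 := by
  intro m
  induction m with
  | zero => simp [hf 0]
  | succ m ih =>
      rw [Finset.prod_range_succ, ih]
      have h := hf m
      calc f m * f 0 * (f (m + 1) * f m) = f (m + 1) * f 0 * (f m * f m) := by ring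
        _ = f (m + 1) * f 0 := by rw [h]; ring

lemma pm_sq {a : ℝ} (ha : a = 1 ∨ a = -1) : a * a = 1 := by
  rcases ha with rfl | rfl <;> norm_num

lemma pm_solve {a b p d : ℝ} (h : a * b + p * d = 0) (hp : p * p = 1) :
    d = -(p * (a * b)) := by
  have h1 : p * d = -(a * b) := by linarith
  calc d = (p * p) * d := by rw [hp]; ring
    _ = p * (p * d) := by ring
    _ = p * (-(a * b)) := by rw [h1]
    _ = -(p * (a * b)) := by ring

lemma pm_solve2 {a b p d : ℝ} (h : a * b + p * d = 0) (hb : b * b = 1) (hd : d * d = 1) :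
    a * d = -(p * b) := by
  have h1 : a * b = -(p * d) := by linarith
  have h2 : a = -(p * d) * b := by
    calc a = (a * b) * b := by rw [mul_assoc, hb]; ring
      _ = -(p * d) * b := by rw [h1]
  calc a * d = (-(p * d) * b) * d := by rw [← h2]
    _ = -(p * b) * (d * d) := by ring
    _ = -(p * b) := by rw [hd]; ring

/-! ### Main argument for `n ≥ 4` -/

lemma no_signing_ge4 (n : ℕ) (hn4 : 4 ≤ n) (hmod : n % 4 = 1 ∨ n % 4 = 2) :
    ¬ ∃ M : Matrix (Fin n → ZMod 2) (Fin n → ZMod 2) ℝ, IsOrthSigning (QPlus n) M := by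
  rintro ⟨M, hsym, hedge, hnon, horth⟩
  have hn2 : 2 ≤ n := by omega
  have hn1 : 1 ≤ n := by omega
  have hnn : ∀ u w, M u w ≠ 0 → (QPlus n).Adj u w := by
    intro u w h
    by_contra hA
    exact h (hnon u w hA)
  have nbr : ∀ u w, M u w ≠ 0 → (∃ i : Fin n, w = u + eV n i) ∨ w = u + sV n := by
    intro u w h
    obtain ⟨hne, hmem⟩ := hnn u w h
    rcases mem_gens.mp hmem with ⟨i, hi⟩ | hs
    · exact Or.inl ⟨i, by rw [hi, ← add_assoc, addself, zero_add]⟩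
    · exact Or.inr (by rw [← hs, ← add_assoc, addself, zero_add])
  -- common neighbours of `x` and `x + eᵢ + eⱼ`
  have CNA : ∀ (x : Fin n → ZMod 2) (i j : Fin n), i ≠ j → ∀ w, M x w ≠ 0 →
      M (x + eV n i + eV n j) w ≠ 0 → w = x + eV n i ∨ w = x + eV n j := by
    intro x i j hij w h1 h2
    rcases nbr x w h1 with ⟨l, rfl⟩ | rfl
    · by_cases hli : l = i
      · exact Or.inl (by rw [hli])
      by_cases hlj : l = j
      · exact Or.inr (by rw [hlj])
      exfalso
      rcases nbr _ _ h2 with ⟨m, hm⟩ | hm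
      · have he : eV n l = eV n i + eV n j + eV n m := shift3 hm
        by_cases hml : m = l
        · subst hml
          have hil : i ≠ m := fun hh => hli hh.symm
          have h := congrFun he i
          simp only [Pi.add_apply] at h
          rw [eV_apply_ne hil, eV_apply_same, eV_apply_ne (show i ≠ j from hij)] at h
          exact absurd h (by decide)
        · have hlm : l ≠ m := fun hh => hml hh.symm
          have h := congrFun he l
          simp only [Pi.add_apply] at h
          rw [eV_apply_same, eV_apply_ne hli, eV_apply_ne hlj, eV_apply_ne hlm] at h
          exact absurd h (by decide)
      · have he : eV n l = eV n i + eV n j + sV n := shift3 hm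
        obtain ⟨t, htl, hti, htj⟩ := exists_fresh hn4 l i j
        have h := congrFun he t
        simp only [Pi.add_apply] at h
        rw [eV_apply_ne htl, eV_apply_ne hti, eV_apply_ne htj, sV_apply] at h
        exact absurd h (by decide)
    · exfalso
      rcases nbr _ _ h2 with ⟨m, hm⟩ | hm
      · have he : sV n = eV n i + eV n j + eV n m := shift3 hm
        obtain ⟨t, hti, htj, htm⟩ := exists_fresh hn4 i j m
        have h := congrFun he t
        simp only [Pi.add_apply] at h
        rw [sV_apply, eV_apply_ne hti, eV_apply_ne htj, eV_apply_ne htm] at h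
        exact absurd h (by decide)
      · have he : sV n = eV n i + eV n j + sV n := shift3 hm
        have h := congrFun he i
        simp only [Pi.add_apply] at h
        rw [sV_apply, eV_apply_same, eV_apply_ne (show i ≠ j from hij)] at h
        exact absurd h (by decide)
  -- common neighbours of `x` and `x + e_k + s`
  have CNB : ∀ (x : Fin n → ZMod 2) (k : Fin n), ∀ w, M x w ≠ 0 →
      M (x + eV n k + sV n) w ≠ 0 → w = x + eV n k ∨ w = x + sV n := by
    intro x k w h1 h2
    rcases nbr x w h1 with ⟨l, rfl⟩ | rfl
    · by_cases hlk : l = k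
      · exact Or.inl (by rw [hlk])
      exfalso
      rcases nbr _ _ h2 with ⟨m, hm⟩ | hm
      · have he : eV n l = eV n k + sV n + eV n m := shift3 hm
        obtain ⟨t, htl, htk, htm⟩ := exists_fresh hn4 l k m
        have h := congrFun he t
        simp only [Pi.add_apply] at h
        rw [eV_apply_ne htl, eV_apply_ne htk, eV_apply_ne htm, sV_apply] at h
        exact absurd h (by decide)
      · have he : eV n l = eV n k + sV n + sV n := shift3 hm
        rw [add_assoc, addself, add_zero] at he
        have h := congrFun he l
        rw [eV_apply_same, eV_apply_ne (show l ≠ k from hlk)] at h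
        exact absurd h (by decide)
    · exact Or.inr rfl
  -- two-term evaluation of orthogonality
  have sum2 : ∀ (u v w₁ w₂ : Fin n → ZMod 2), u ≠ v → w₁ ≠ w₂ →
      (∀ w, M u w ≠ 0 → M v w ≠ 0 → w = w₁ ∨ w = w₂) →
      M u w₁ * M v w₁ + M u w₂ * M v w₂ = 0 := by
    intro u v w₁ w₂ huv hw hcn
    have h0 := horth u v huv
    have hsub : ∑ w ∈ ({w₁, w₂} : Finset _), M u w * M v w = ∑ w, M u w * M v w := by
      apply Finset.sum_subset (Finset.subset_univ _)
      intro w _ hwmem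
      by_contra hz
      rcases mul_ne_zero_iff.mp hz with ⟨hz1, hz2⟩
      rcases hcn w hz1 hz2 with rfl | rfl
      · exact hwmem (by simp)
      · exact hwmem (by simp)
    rw [Finset.sum_pair hw] at hsub
    rw [hsub]
    exact h0
  -- distinctness facts
  have hne_x_eVij : ∀ (x : Fin n → ZMod 2) (i j : Fin n), i ≠ j → x ≠ x + eV n i + eV n j := by
    intro x i j hij h
    have h' : x + 0 = x + eV n i + eV n j := by rw [add_zero]; exact h
    have he : (0 : Fin n → ZMod 2) = eV n i + eV n j := shift2 h'
    have hc := congrFun he i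
    simp only [Pi.add_apply, Pi.zero_apply] at hc
    rw [eV_apply_same, eV_apply_ne (show i ≠ j from hij)] at hc
    exact absurd hc (by decide)
  have hne_wij : ∀ (x : Fin n → ZMod 2) (i j : Fin n), i ≠ j → x + eV n i ≠ x + eV n j := by
    intro x i j hij h
    exact eV_ne_eV hij (add_left_cancel h)
  have hne_x_eks : ∀ (x : Fin n → ZMod 2) (k : Fin n), x ≠ x + eV n k + sV n := by
    intro x k h
    have h' : x + 0 = x + eV n k + sV n := by rw [add_zero]; exact h
    have he : (0 : Fin n → ZMod 2) = eV n k + sV n := shift2 h'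
    have hcard : 1 < Fintype.card (Fin n) := by simp; omega
    obtain ⟨t, ht⟩ := Fintype.exists_ne_of_one_lt_card hcard k
    have hc := congrFun he t
    simp only [Pi.add_apply, Pi.zero_apply] at hc
    rw [eV_apply_ne ht, sV_apply] at hc
    exact absurd hc (by decide)
  have hne_wks : ∀ (x : Fin n → ZMod 2) (k : Fin n), x + eV n k ≠ x + sV n := by
    intro x k h
    exact eV_ne_sV hn2 k (add_left_cancel h)
  -- the A (square) relation
  have hA : ∀ (y : Fin n → ZMod 2) (i j : Fin n), i ≠ j →
      M y (y + eV n i) * M (y + eV n i) (y + eV n i + eV n j)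
        + M y (y + eV n j) * M (y + eV n j) (y + eV n j + eV n i) = 0 := by
    intro y i j hij
    have h := sum2 y (y + eV n i + eV n j) (y + eV n i) (y + eV n j)
      (hne_x_eVij y i j hij) (hne_wij y i j hij) (CNA y i j hij)
    have h2 : M (y + eV n i + eV n j) (y + eV n j) = M (y + eV n j) (y + eV n j + eV n i) := by
      rw [hsym.apply (y + eV n j) (y + eV n i + eV n j), add_right_comm]
    rw [hsym.apply (y + eV n i) (y + eV n i + eV n j), h2] at h
    exact h
  -- the B (diagonal square) relation
  have hB : ∀ (x : Fin n → ZMod 2) (k : Fin n),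
      M x (x + eV n k) * M (x + eV n k) (x + eV n k + sV n)
        + M x (x + sV n) * M (x + sV n) (x + sV n + eV n k) = 0 := by
    intro x k
    have h := sum2 x (x + eV n k + sV n) (x + eV n k) (x + sV n)
      (hne_x_eks x k) (hne_wks x k) (CNB x k)
    have h2 : M (x + eV n k + sV n) (x + sV n) = M (x + sV n) (x + sV n + eV n k) := by
      rw [hsym.apply (x + sV n) (x + eV n k + sV n), add_right_comm]
    rw [hsym.apply (x + eV n k) (x + eV n k + sV n), h2] at h
    exact h
  -- ±1 facts in ℕ-indexed form
  have pmc : ∀ (k : ℕ), k < n → ∀ x, M x (x + eN n k) = 1 ∨ M x (x + eN n k) = -1 := by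
    intro k hk x
    rw [heN k hk]
    exact hedge _ _ (adj_e x ⟨k, hk⟩)
  have sqc : ∀ (k : ℕ), k < n → ∀ x, M x (x + eN n k) * M x (x + eN n k) = 1 :=
    fun k hk x => pm_sq (pmc k hk x)
  have pmD : ∀ x, M x (x + sV n) = 1 ∨ M x (x + sV n) = -1 :=
    fun x => hedge _ _ (adj_s hn1 x)
  have sqD : ∀ x, M x (x + sV n) * M x (x + sV n) = 1 := fun x => pm_sq (pmD x)
  have symc : ∀ (k : ℕ), k < n → ∀ x,
      M (x + eN n k) (x + eN n k + eN n k) = M x (x + eN n k) := by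
    intro k hk x
    have h1 : x + eN n k + eN n k = x := by rw [add_assoc, addself, add_zero]
    rw [h1]
    exact hsym.apply x (x + eN n k)
  -- rearranged A relation (ℕ indices)
  have L1 : ∀ (k m : ℕ), k < n → m < n → k ≠ m → ∀ y,
      M (y + eN n m) (y + eN n m + eN n k) =
        -(M y (y + eN n m) * (M y (y + eN n k) * M (y + eN n k) (y + eN n k + eN n m))) := by
    intro k m hk hm hkm y
    have h := hA y ⟨k, hk⟩ ⟨m, hm⟩ (Fin.ne_of_val_ne hkm)
    rw [← heN k hk, ← heN m hm] at h
    exact pm_solve h (sqc m hm y)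
  -- rearranged B relation (ℕ indices)
  have LB : ∀ (k : ℕ), k < n → ∀ x,
      M x (x + eN n k) * M (x + sV n) (x + sV n + eN n k) =
        -(M x (x + sV n) * M (x + eN n k) (x + eN n k + sV n)) := by
    intro k hk x
    have h := hB x ⟨k, hk⟩
    rw [← heN k hk] at h
    exact pm_solve2 h (sqD (x + eN n k)) (sqc k hk (x + sV n))
  -- the key inductive computation
  have HU : ∀ m, m ≤ n →
      ∏ k ∈ Finset.range m,
        (M (WV n 0 k) (WV n 0 k + eN n k) *
         M (WV n (k+1) m) (WV n (k+1) m + eN n k)) =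
      (-1 : ℝ) ^ (∑ i ∈ Finset.range m, i) := by
    intro m
    induction m with
    | zero => intro _; simp
    | succ m ih =>
      intro hm1
      have hmn : m < n := hm1
      have hmle : m ≤ n := le_of_lt hmn
      rw [Finset.prod_range_succ, WV_same (m+1)]
      have hfac : ∀ k ∈ Finset.range m,
          M (WV n 0 k) (WV n 0 k + eN n k) *
            M (WV n (k+1) (m+1)) (WV n (k+1) (m+1) + eN n k)
          = (M (WV n 0 k) (WV n 0 k + eN n k) * M (WV n (k+1) m) (WV n (k+1) m + eN n k))
            * (-1 * (M (WV n (k+1) m) (WV n (k+1) m + eN n m) *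
                M (WV n k m) (WV n k m + eN n m))) := by
        intro k hk
        have hkm : k < m := Finset.mem_range.mp hk
        have hkn : k < n := lt_trans hkm hmn
        have hW1 : WV n (k+1) (m+1) = WV n (k+1) m + eN n m := WV_succ_top hkm
        have hW2 : WV n (k+1) m + eN n k = WV n k m := by
          rw [WV_succ_bot hkm]
          exact add_comm _ _
        rw [hW1, L1 k m hkn hmn (Nat.ne_of_lt hkm) (WV n (k+1) m), hW2]
        ring
      rw [Finset.prod_congr rfl hfac, Finset.prod_mul_distrib, ih hmle]
      have htele : ∏ k ∈ Finset.range m,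
          (-1 * (M (WV n (k+1) m) (WV n (k+1) m + eN n m) *
            M (WV n k m) (WV n k m + eN n m)))
          = (-1:ℝ)^m * (M (WV n m m) (WV n m m + eN n m) *
              M (WV n 0 m) (WV n 0 m + eN n m)) := by
        rw [Finset.prod_mul_distrib, Finset.prod_const, Finset.card_range]
        congr 1
        exact tele_prod (fun k => M (WV n k m) (WV n k m + eN n m)) (fun k => sqc m hmn _) m
      rw [htele, WV_same m, Finset.sum_range_succ, pow_add]
      have s1 := sqc m hmn (0 : Fin n → ZMod 2)
      have s2 := sqc m hmn (WV n 0 m)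
      have hring : (-1:ℝ)^(∑ i ∈ Finset.range m, i) *
          ((-1:ℝ)^m * (M 0 (0 + eN n m) * M (WV n 0 m) (WV n 0 m + eN n m))) *
          (M (WV n 0 m) (WV n 0 m + eN n m) * M 0 (0 + eN n m))
          = (-1:ℝ)^(∑ i ∈ Finset.range m, i) * (-1:ℝ)^m *
            ((M 0 (0 + eN n m) * M 0 (0 + eN n m)) *
             (M (WV n 0 m) (WV n 0 m + eN n m) * M (WV n 0 m) (WV n 0 m + eN n m))) := by
        ring
      rw [hring, s1, s2]
      ring
  -- the second evaluation of the same product, via the B relations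
  have h2 : ∏ k ∈ Finset.range n,
      (M (WV n 0 k) (WV n 0 k + eN n k) *
       M (WV n (k+1) n) (WV n (k+1) n + eN n k)) = (-1:ℝ)^n := by
    have hfac : ∀ k ∈ Finset.range n,
        M (WV n 0 k) (WV n 0 k + eN n k) * M (WV n (k+1) n) (WV n (k+1) n + eN n k)
        = -1 * (M (WV n 0 k) (WV n 0 k + sV n) *
            M (WV n 0 (k+1)) (WV n 0 (k+1) + sV n)) := by
      intro k hk
      have hkn : k < n := Finset.mem_range.mp hk
      have hWkn : WV n k n = WV n (k+1) n + eN n k := by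
        rw [WV_succ_bot hkn]
        exact add_comm _ _
      have hsk := symc k hkn (WV n (k+1) n)
      rw [← hsk, ← hWkn, ← WV_plus_s (le_of_lt hkn), LB k hkn (WV n 0 k),
        ← WV_succ_top (Nat.zero_le k)]
      ring
    rw [Finset.prod_congr rfl hfac, Finset.prod_mul_distrib, Finset.prod_const,
      Finset.card_range]
    have hcomm : ∏ k ∈ Finset.range n,
        (M (WV n 0 k) (WV n 0 k + sV n) * M (WV n 0 (k+1)) (WV n 0 (k+1) + sV n))
        = ∏ k ∈ Finset.range n,
        (M (WV n 0 (k+1)) (WV n 0 (k+1) + sV n) * M (WV n 0 k) (WV n 0 k + sV n)) :=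
      Finset.prod_congr rfl (fun k _ => mul_comm _ _)
    have htele := tele_prod (fun k => M (WV n 0 k) (WV n 0 k + sV n)) (fun k => sqD _) n
    rw [hcomm, htele, WV_zero_n, WV_same 0, addself (sV n), zero_add,
      ← hsym.apply (sV n) 0]
    have hq : M 0 (sV n) * M 0 (sV n) = 1 := by
      have := sqD (0 : Fin n → ZMod 2)
      rwa [zero_add] at this
    rw [hq, mul_one]
  have h1 := HU n le_rfl
  rw [h2] at h1
  -- parity contradiction
  have hE2 : (∑ i ∈ Finset.range n, i) * 2 = n * (n - 1) := Finset.sum_range_id_mul_two n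
  rcases hmod with hm1 | hm2
  · obtain ⟨t, rfl⟩ : ∃ t, n = 4 * t + 1 := ⟨n / 4, by omega⟩
    have ha : (4*t+1) * ((4*t+1) - 1) = 2 * (2 * (t * (4*t+1))) := by
      have hsub : (4*t+1) - 1 = 4*t := by omega
      rw [hsub]; ring
    obtain ⟨a, hhE⟩ : ∃ a, (∑ i ∈ Finset.range (4*t+1), i) * 2 = 2 * (2 * a) :=
      ⟨t * (4*t+1), hE2.trans ha⟩
    have hEven : Even (∑ i ∈ Finset.range (4*t+1), i) := ⟨a, by omega⟩
    have hOdd : Odd (4*t+1) := ⟨2*t, by ring⟩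
    rw [hEven.neg_one_pow, hOdd.neg_one_pow] at h1
    norm_num at h1
  · obtain ⟨t, rfl⟩ : ∃ t, n = 4 * t + 2 := ⟨n / 4, by omega⟩
    have ha : (4*t+2) * ((4*t+2) - 1) = 2 * (2 * (4*t*t + 3*t) + 1) := by
      have hsub : (4*t+2) - 1 = 4*t+1 := by omega
      rw [hsub]; ring
    obtain ⟨a, hhE⟩ : ∃ a, (∑ i ∈ Finset.range (4*t+2), i) * 2 = 2 * (2 * a + 1) :=
      ⟨4*t*t + 3*t, hE2.trans ha⟩
    have hOddE : Odd (∑ i ∈ Finset.range (4*t+2), i) := ⟨a, by omega⟩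
    have hEvenn : Even (4*t+2) := ⟨2*t+1, by ring⟩
    rw [hOddE.neg_one_pow, hEvenn.neg_one_pow] at h1
    norm_num at h1

lemma sq_mul' {x y : ℝ} (hx : x * x = 1) (hy : y * y = 1) : (x * y) * (x * y) = 1 := by
  calc (x * y) * (x * y) = (x * x) * (y * y) := by ring
    _ = 1 := by rw [hx, hy]; ring

lemma pm_opp {u v : ℝ} (hu : u * u = 1) (h : u + v = 0) : u * v = -1 := by
  have hv : v = -u := by linarith
  rw [hv]
  calc u * -u = -(u * u) := by ring
    _ = -1 := by rw [hu]

lemma no_signing_two :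
    ¬ ∃ M : Matrix (Fin 2 → ZMod 2) (Fin 2 → ZMod 2) ℝ, IsOrthSigning (QPlus 2) M := by
  rintro ⟨M, hsym, hedge, hnon, horth⟩
  set a : Fin 2 → ZMod 2 := eV 2 0 with ha
  set b : Fin 2 → ZMod 2 := eV 2 1 with hb
  set s : Fin 2 → ZMod 2 := sV 2 with hs
  have hall : ∀ w : Fin 2 → ZMod 2, w = 0 ∨ w = a ∨ w = b ∨ w = s := by decide
  -- adjacency of all six pairs
  have memS : ∀ g : Fin 2 → ZMod 2, g = a ∨ g = b ∨ g = s → g ∈ QPlusGens 2 := by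
    rintro g (rfl | rfl | rfl)
    · exact Or.inl ⟨0, rfl⟩
    · exact Or.inl ⟨1, rfl⟩
    · exact Or.inr rfl
  have adj : ∀ x y : Fin 2 → ZMod 2, x ≠ y → (x + y = a ∨ x + y = b ∨ x + y = s) →
      (QPlus 2).Adj x y := by
    intro x y hxy hmem
    exact ⟨hxy, memS _ hmem⟩
  have adj0a : (QPlus 2).Adj 0 a := adj _ _ (by decide) (by decide)
  have adj0b : (QPlus 2).Adj 0 b := adj _ _ (by decide) (by decide)
  have adj0s : (QPlus 2).Adj 0 s := adj _ _ (by decide) (by decide)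
  have adjab : (QPlus 2).Adj a b := adj _ _ (by decide) (by decide)
  have adjas : (QPlus 2).Adj a s := adj _ _ (by decide) (by decide)
  have adjbs : (QPlus 2).Adj b s := adj _ _ (by decide) (by decide)
  -- diagonal entries vanish
  have d0 : M 0 0 = 0 := hnon _ _ ((QPlus 2).loopless.irrefl 0)
  have da : M a a = 0 := hnon _ _ ((QPlus 2).loopless.irrefl a)
  have db : M b b = 0 := hnon _ _ ((QPlus 2).loopless.irrefl b)
  have ds : M s s = 0 := hnon _ _ ((QPlus 2).loopless.irrefl s)
  -- evaluate orthogonality sums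
  have ev : ∀ u v w₁ w₂ : Fin 2 → ZMod 2, u ≠ v → w₁ ≠ w₂ →
      (∀ w, w = u ∨ w = v ∨ w = w₁ ∨ w = w₂) → M u u = 0 → M v v = 0 →
      M u w₁ * M v w₁ + M u w₂ * M v w₂ = 0 := by
    intro u v w₁ w₂ huv hw hcl hu hv
    have h0 := horth u v huv
    have hsub : ∑ w ∈ ({w₁, w₂} : Finset _), M u w * M v w = ∑ w, M u w * M v w := by
      apply Finset.sum_subset (Finset.subset_univ _)
      intro w _ hwmem
      rcases hcl w with rfl | rfl | rfl | rfl
      · rw [hu, zero_mul]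
      · rw [hv, mul_zero]
      · exact absurd (by simp) hwmem
      · exact absurd (by simp) hwmem
    rw [Finset.sum_pair hw] at hsub
    rw [hsub]
    exact h0
  have e1 : M 0 b * M a b + M 0 s * M a s = 0 := by
    have h := ev 0 a b s (by decide) (by decide) (by intro w; rcases hall w with h|h|h|h <;> tauto)
      d0 da
    exact h
  have e2 : M 0 a * M a b + M 0 s * M b s = 0 := by
    have h := ev 0 b a s (by decide) (by decide) (by intro w; rcases hall w with h|h|h|h <;> tauto)
      d0 db
    rwa [hsym.apply a b] at h
  have e3 : M 0 a * M a s + M 0 b * M b s = 0 := by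
    have h := ev 0 s a b (by decide) (by decide) (by intro w; rcases hall w with h|h|h|h <;> tauto)
      d0 ds
    rwa [hsym.apply a s, hsym.apply b s] at h
  -- ±1 facts
  have p1 := pm_sq (hedge _ _ adj0a)
  have p2 := pm_sq (hedge _ _ adj0b)
  have p3 := pm_sq (hedge _ _ adj0s)
  have p4 := pm_sq (hedge _ _ adjab)
  have p5 := pm_sq (hedge _ _ adjas)
  have p6 := pm_sq (hedge _ _ adjbs)
  have q1 : (M 0 b * M a b) * (M 0 s * M a s) = -1 := pm_opp (sq_mul' p2 p4) e1
  have q2 : (M 0 a * M a b) * (M 0 s * M b s) = -1 := pm_opp (sq_mul' p1 p4) e2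
  have q3 : (M 0 a * M a s) * (M 0 b * M b s) = -1 := pm_opp (sq_mul' p1 p5) e3
  have hsq : ((M 0 a * M 0 b * M 0 s) * (M a b * M a s * M b s))^2 = -1 := by
    calc ((M 0 a * M 0 b * M 0 s) * (M a b * M a s * M b s))^2
        = ((M 0 b * M a b) * (M 0 s * M a s)) *
          (((M 0 a * M a b) * (M 0 s * M b s)) * ((M 0 a * M a s) * (M 0 b * M b s))) := by
          ring
      _ = -1 := by rw [q1, q2, q3]; norm_num
  nlinarith [sq_nonneg ((M 0 a * M 0 b * M 0 s) * (M a b * M a s * M b s)), hsq]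

theorem stmt13 (n : ℕ) (hn : 2 ≤ n) (hmod : n % 4 = 1 ∨ n % 4 = 2) :
    ¬ ∃ M : Matrix (Fin n → ZMod 2) (Fin n → ZMod 2) ℝ, IsOrthSigning (QPlus n) M := by
  have h : n = 2 ∨ 4 ≤ n := by omega
  rcases h with rfl | h4
  · exact no_signing_two
  · exact no_signing_ge4 n h4 hmod
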